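/- Let U be a Hopf algebra over k and P a right U-module. With B = (−) ⊗_k U, D = U ⊗_k (−), θ as above, the triple (P ⊗_k −, σ, γ) with σ_X(p ⊗ x ⊗ u) = pu_{(1)} ⊗ x ⊗ u_{(2)} and γ_X(p ⊗ u ⊗ x) = u ⊗ p ⊗ x is a factorisation of the mixed distributive law θ : B ⟶ D; that is, σ is a distributive law from the monad B to P ⊗_k (−), γ is a distributive law from P ⊗_k (−) to the comonad D, and the Yang–Baxter hexagon with θ commutes. -/

import Mathlib

open TensorProduct

universe u

namespace BohmStefan

variable (k : Type u) [CommRing k]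
variable (U : Type u) [Ring U] [HopfAlgebra k U]

/-- The map `v ↦ S(v₍₂₎) ⊗ v₍₁₎`. -/
noncomputable def antipodeSwap : U →ₗ[k] U ⊗[k] U :=
  (TensorProduct.comm k U U).toLinearMap ∘ₗ
    (TensorProduct.map LinearMap.id (HopfAlgebra.antipode (R := k))) ∘ₗ
      Coalgebra.comul

/-- The mixed distributive law `θ_X : (U ⊗ X) ⊗ U ⟶ U ⊗ (X ⊗ U)`,
`u ⊗ x ⊗ v ↦ S(v₍₂₎)u ⊗ x ⊗ v₍₁₎`. -/
noncomputable def thetaMap (X : Type u) [AddCommGroup X] [Module k X] :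
    (U ⊗[k] X) ⊗[k] U →ₗ[k] U ⊗[k] (X ⊗[k] U) :=
  (TensorProduct.map
      ((LinearMap.mul' k U) ∘ₗ (TensorProduct.comm k U U).toLinearMap) LinearMap.id) ∘ₗ
    (tensorTensorTensorComm k U X U U).toLinearMap ∘ₗ
      (TensorProduct.map LinearMap.id (antipodeSwap k U))

/-- The multiplication `μ_P : (P ⊗ U) ⊗ U ⟶ P ⊗ U` of the monad `B = (−) ⊗ U`. -/
noncomputable def muMap (P : Type u) [AddCommGroup P] [Module k P] :
    (P ⊗[k] U) ⊗[k] U →ₗ[k] P ⊗[k] U :=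
  (TensorProduct.map LinearMap.id (LinearMap.mul' k U)) ∘ₗ
    (TensorProduct.assoc k P U U).toLinearMap

/-- The unit `η_P : P ⟶ P ⊗ U`, `p ↦ p ⊗ 1`, of the monad `B = (−) ⊗ U`. -/
noncomputable def etaMap (P : Type u) [AddCommGroup P] [Module k P] :
    P →ₗ[k] P ⊗[k] U :=
  (TensorProduct.mk k P U).flip 1

/-- The comultiplication `Δ_P : U ⊗ P ⟶ U ⊗ (U ⊗ P)` of the comonad `D = U ⊗ (−)`. -/
noncomputable def deltaMap (P : Type u) [AddCommGroup P] [Module k P] :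
    U ⊗[k] P →ₗ[k] U ⊗[k] (U ⊗[k] P) :=
  (TensorProduct.assoc k U U P).toLinearMap ∘ₗ
    (TensorProduct.map Coalgebra.comul LinearMap.id)

/-- The counit `ε_P : U ⊗ P ⟶ P` of the comonad `D = U ⊗ (−)`. -/
noncomputable def epsMap (P : Type u) [AddCommGroup P] [Module k P] :
    U ⊗[k] P →ₗ[k] P :=
  (TensorProduct.lid k P).toLinearMap ∘ₗ
    (TensorProduct.map (Coalgebra.counit (R := k)) LinearMap.id)

variable (P : Type u) [AddCommGroup P] [Module k P]
variable [Module Uᵐᵒᵖ P] [IsScalarTower k Uᵐᵒᵖ P] [SMulCommClass k Uᵐᵒᵖ P]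

/-- The right action `P ⊗ U ⟶ P`, `p ⊗ u ↦ p·u`, of `U` on a right `U`-module `P`. -/
noncomputable def actP : P ⊗[k] U →ₗ[k] P :=
  TensorProduct.lift (LinearMap.mk₂ k (fun p u => MulOpposite.op u • p)
    (fun p p' u => smul_add _ _ _)
    (fun c p u => smul_comm _ _ _)
    (fun p u u' => by (try simp only []); rw [MulOpposite.op_add, add_smul])
    (fun c p u => by (try simp only []); rw [MulOpposite.op_smul, smul_assoc]))

/-- The distributive law `σ_X : (P ⊗ X) ⊗ U ⟶ P ⊗ (X ⊗ U)`,
`p ⊗ x ⊗ u ↦ pu₍₁₎ ⊗ x ⊗ u₍₂₎`. -/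
noncomputable def sigmaMap (X : Type u) [AddCommGroup X] [Module k X] :
    (P ⊗[k] X) ⊗[k] U →ₗ[k] P ⊗[k] (X ⊗[k] U) :=
  (TensorProduct.map (actP k U P) LinearMap.id) ∘ₗ
    (tensorTensorTensorComm k P X U U).toLinearMap ∘ₗ
      (TensorProduct.map LinearMap.id Coalgebra.comul)

/-- The distributive law `γ_X : P ⊗ (U ⊗ X) ⟶ U ⊗ (P ⊗ X)`, `p ⊗ u ⊗ x ↦ u ⊗ p ⊗ x`. -/
noncomputable def gammaMap (X : Type u) [AddCommGroup X] [Module k X] :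
    P ⊗[k] (U ⊗[k] X) →ₗ[k] U ⊗[k] (P ⊗[k] X) :=
  (TensorProduct.leftComm k P U X).toLinearMap

@[simp]
lemma actP_tmul (p : P) (u : U) : actP k U P (p ⊗ₜ u) = MulOpposite.op u • p := by
  simp [actP]

lemma sigma_natural (X Y : Type u) [AddCommGroup X] [Module k X] [AddCommGroup Y] [Module k Y]
    (f : X →ₗ[k] Y) :
    sigmaMap k U P Y ∘ₗ
        (TensorProduct.map (TensorProduct.map LinearMap.id f) LinearMap.id) =
      (TensorProduct.map LinearMap.id (TensorProduct.map f LinearMap.id)) ∘ₗ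
        sigmaMap k U P X := by
  ext p x u
  simp only [sigmaMap, LinearMap.comp_apply, LinearEquiv.coe_coe, TensorProduct.map_tmul,
    LinearMap.id_coe, id_eq, TensorProduct.AlgebraTensorModule.curry_apply,
    TensorProduct.curry_apply, LinearMap.coe_restrictScalars]
  generalize Coalgebra.comul (R := k) u = c
  induction c using TensorProduct.induction_on with
  | zero => simp
  | tmul a b => simp
  | add y z hy hz => simp only [TensorProduct.tmul_add, map_add, hy, hz]

lemma gamma_natural (X Y : Type u) [AddCommGroup X] [Module k X] [AddCommGroup Y] [Module k Y]
    (f : X →ₗ[k] Y) :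
    gammaMap k U P Y ∘ₗ
        (TensorProduct.map LinearMap.id (TensorProduct.map LinearMap.id f)) =
      (TensorProduct.map LinearMap.id (TensorProduct.map LinearMap.id f)) ∘ₗ
        gammaMap k U P X := by
  ext p u x
  simp [gammaMap]

lemma sigma_mu (X : Type u) [AddCommGroup X] [Module k X] :
    sigmaMap k U P X ∘ₗ muMap k U (P ⊗[k] X) =
      (TensorProduct.map LinearMap.id (muMap k U X)) ∘ₗ
        sigmaMap k U P (X ⊗[k] U) ∘ₗ
          (TensorProduct.map (sigmaMap k U P X) LinearMap.id) := by
  ext p x u v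
  simp only [sigmaMap, muMap, LinearMap.comp_apply, LinearEquiv.coe_coe,
    TensorProduct.map_tmul, LinearMap.id_coe, id_eq, TensorProduct.assoc_tmul,
    LinearMap.mul'_apply, TensorProduct.AlgebraTensorModule.curry_apply,
    TensorProduct.curry_apply, LinearMap.coe_restrictScalars, Bialgebra.comul_mul]
  generalize Coalgebra.comul (R := k) u = c
  generalize Coalgebra.comul (R := k) v = d
  induction c using TensorProduct.induction_on with
  | zero => simp
  | add y z hy hz => simp only [TensorProduct.tmul_add, add_mul, map_add, hy, hz,
      TensorProduct.add_tmul]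
  | tmul a b =>
    induction d using TensorProduct.induction_on with
    | zero => simp
    | add y z hy hz => simp only [TensorProduct.tmul_add, mul_add, map_add, hy, hz]
    | tmul a' b' =>
      simp only [Algebra.TensorProduct.tmul_mul_tmul, TensorProduct.tensorTensorTensorComm_tmul,
        TensorProduct.map_tmul, actP_tmul, LinearMap.id_coe, id_eq, TensorProduct.assoc_tmul,
        LinearMap.mul'_apply, LinearMap.comp_apply]
      rw [MulOpposite.op_mul, mul_smul]
      simp

lemma sigma_eta (X : Type u) [AddCommGroup X] [Module k X] :
    sigmaMap k U P X ∘ₗ etaMap k U (P ⊗[k] X) =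
      TensorProduct.map LinearMap.id (etaMap k U X) := by
  ext p x
  simp [sigmaMap, etaMap, Algebra.TensorProduct.one_def]

lemma gamma_delta (X : Type u) [AddCommGroup X] [Module k X] :
    deltaMap k U (P ⊗[k] X) ∘ₗ gammaMap k U P X =
      (TensorProduct.map LinearMap.id (gammaMap k U P X)) ∘ₗ
        gammaMap k U P (U ⊗[k] X) ∘ₗ
          (TensorProduct.map LinearMap.id (deltaMap k U X)) := by
  ext p u x
  simp only [deltaMap, gammaMap, LinearMap.comp_apply, LinearEquiv.coe_coe,
    TensorProduct.map_tmul, LinearMap.id_coe, id_eq, TensorProduct.leftComm_tmul,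
    TensorProduct.AlgebraTensorModule.curry_apply, TensorProduct.curry_apply,
    LinearMap.coe_restrictScalars]
  generalize Coalgebra.comul (R := k) u = c
  induction c using TensorProduct.induction_on with
  | zero => simp
  | tmul a b => simp
  | add y z hy hz => simp only [map_add, TensorProduct.add_tmul, TensorProduct.tmul_add,
      hy, hz]

lemma gamma_eps (X : Type u) [AddCommGroup X] [Module k X] :
    epsMap k U (P ⊗[k] X) ∘ₗ gammaMap k U P X =
      TensorProduct.map LinearMap.id (epsMap k U X) := by
  ext p u x
  simp [epsMap, gammaMap, TensorProduct.smul_tmul]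

/-- Auxiliary trilinear map for the hexagon:
`a ⊗ (b ⊗ c) ↦ S(c)·u ⊗ ((op a • p) ⊗ (x ⊗ b))`. -/
noncomputable def PhiAux (X : Type u) [AddCommGroup X] [Module k X] (p : P) (u : U) (x : X) :
    U ⊗[k] (U ⊗[k] U) →ₗ[k] U ⊗[k] (P ⊗[k] (X ⊗[k] U)) :=
  (TensorProduct.map ((LinearMap.mulRight k u) ∘ₗ (HopfAlgebra.antipode (R := k)))
      (TensorProduct.map ((actP k U P) ∘ₗ (TensorProduct.mk k P U p))
        (TensorProduct.mk k X U x))) ∘ₗ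
    (TensorProduct.leftComm k U U U).toLinearMap ∘ₗ
      (TensorProduct.map LinearMap.id (TensorProduct.comm k U U).toLinearMap)

@[simp]
lemma PhiAux_tmul (X : Type u) [AddCommGroup X] [Module k X] (p : P) (u : U) (x : X)
    (a b c : U) :
    PhiAux k U P X p u x (a ⊗ₜ (b ⊗ₜ c)) =
      (HopfAlgebra.antipode (R := k) c * u) ⊗ₜ
        ((MulOpposite.op a • p) ⊗ₜ (x ⊗ₜ b)) := by
  simp [PhiAux]

set_option maxHeartbeats 1600000 in
lemma hexagon (X : Type u) [AddCommGroup X] [Module k X] :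
    gammaMap k U P (X ⊗[k] U) ∘ₗ
        (TensorProduct.map LinearMap.id (thetaMap k U X)) ∘ₗ
          sigmaMap k U P (U ⊗[k] X) =
      (TensorProduct.map LinearMap.id (sigmaMap k U P X)) ∘ₗ
        thetaMap k U (P ⊗[k] X) ∘ₗ
          (TensorProduct.map (gammaMap k U P X) LinearMap.id) := by
  ext p u x v
  have h1 : (gammaMap k U P (X ⊗[k] U) ∘ₗ
        (TensorProduct.map LinearMap.id (thetaMap k U X)) ∘ₗ
          sigmaMap k U P (U ⊗[k] X)) ((p ⊗ₜ (u ⊗ₜ x)) ⊗ₜ v) =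
      PhiAux k U P X p u x
        ((Coalgebra.comul (R := k) (A := U)).lTensor U (Coalgebra.comul v)) := by
    simp only [sigmaMap, gammaMap, thetaMap, antipodeSwap, LinearMap.comp_apply,
      LinearEquiv.coe_coe, TensorProduct.map_tmul, LinearMap.id_coe, id_eq]
    generalize Coalgebra.comul (R := k) v = c
    induction c using TensorProduct.induction_on with
    | zero => simp only [map_zero, TensorProduct.tmul_zero, TensorProduct.zero_tmul]
    | add y z hy hz => simp only [TensorProduct.tmul_add, map_add, hy, hz]
    | tmul a b =>
      simp only [TensorProduct.tensorTensorTensorComm_tmul, TensorProduct.map_tmul,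
        actP_tmul, LinearMap.id_coe, id_eq, LinearMap.lTensor_tmul, LinearMap.comp_apply,
        LinearEquiv.coe_coe]
      generalize Coalgebra.comul (R := k) b = d
      induction d using TensorProduct.induction_on with
      | zero => simp only [map_zero, TensorProduct.tmul_zero, TensorProduct.zero_tmul,
          TensorProduct.smul_tmul']
      | add y z hy hz => simp only [TensorProduct.tmul_add, map_add, hy, hz]
      | tmul a' b' => simp [mul_comm]
  have h2 : ((TensorProduct.map LinearMap.id (sigmaMap k U P X)) ∘ₗ
        thetaMap k U (P ⊗[k] X) ∘ₗ
          (TensorProduct.map (gammaMap k U P X) LinearMap.id)) ((p ⊗ₜ (u ⊗ₜ x)) ⊗ₜ v) =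
      PhiAux k U P X p u x
        ((TensorProduct.assoc k U U U)
          ((Coalgebra.comul (R := k) (A := U)).rTensor U (Coalgebra.comul v))) := by
    simp only [sigmaMap, gammaMap, thetaMap, antipodeSwap, LinearMap.comp_apply,
      LinearEquiv.coe_coe, TensorProduct.map_tmul, LinearMap.id_coe, id_eq,
      TensorProduct.leftComm_tmul]
    generalize Coalgebra.comul (R := k) v = c
    induction c using TensorProduct.induction_on with
    | zero => simp only [map_zero, TensorProduct.tmul_zero, TensorProduct.zero_tmul]
    | add y z hy hz => simp only [TensorProduct.tmul_add, map_add, hy, hz]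
    | tmul a b =>
      simp only [TensorProduct.map_tmul, TensorProduct.comm_tmul, LinearMap.id_coe, id_eq,
        TensorProduct.tensorTensorTensorComm_tmul, LinearMap.mul'_apply,
        LinearMap.rTensor_tmul, LinearMap.comp_apply, LinearEquiv.coe_coe]
      generalize Coalgebra.comul (R := k) a = d
      induction d using TensorProduct.induction_on with
      | zero => simp only [map_zero, TensorProduct.tmul_zero, TensorProduct.zero_tmul]
      | add y z hy hz => simp only [TensorProduct.tmul_add, TensorProduct.add_tmul,
          map_add, hy, hz]
      | tmul a' b' => simp
  simp only [TensorProduct.AlgebraTensorModule.curry_apply, TensorProduct.curry_apply,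
    LinearMap.coe_restrictScalars, LinearMap.comp_apply] at h1 h2 ⊢
  rw [h1, h2, Coalgebra.coassoc_apply]

/-- for a Hopf algebra `U` over `k` and a right `U`-module `P`, the
triple `(P ⊗ −, σ, γ)` with `σ_X(p ⊗ x ⊗ u) = pu₍₁₎ ⊗ x ⊗ u₍₂₎` and
`γ_X(p ⊗ u ⊗ x) = u ⊗ p ⊗ x` is a factorisation of the mixed distributive law
`θ : B ⟶ D`, `θ_X(u ⊗ x ⊗ v) = S(v₍₂₎)u ⊗ x ⊗ v₍₁₎`. -/
theorem rightModule_factorisation :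
    -- naturality of `σ` and `γ` in `X`:
    (∀ (X Y : Type u) [AddCommGroup X] [Module k X] [AddCommGroup Y] [Module k Y]
        (f : X →ₗ[k] Y),
      sigmaMap k U P Y ∘ₗ
          (TensorProduct.map (TensorProduct.map LinearMap.id f) LinearMap.id) =
        (TensorProduct.map LinearMap.id (TensorProduct.map f LinearMap.id)) ∘ₗ
          sigmaMap k U P X) ∧
    (∀ (X Y : Type u) [AddCommGroup X] [Module k X] [AddCommGroup Y] [Module k Y]
        (f : X →ₗ[k] Y),
      gammaMap k U P Y ∘ₗ
          (TensorProduct.map LinearMap.id (TensorProduct.map LinearMap.id f)) =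
        (TensorProduct.map LinearMap.id (TensorProduct.map LinearMap.id f)) ∘ₗ
          gammaMap k U P X) ∧
    -- `σ` is a distributive law from the monad `B = (−) ⊗ U` to `P ⊗ (−)`:
    (∀ (X : Type u) [AddCommGroup X] [Module k X],
      sigmaMap k U P X ∘ₗ muMap k U (P ⊗[k] X) =
        (TensorProduct.map LinearMap.id (muMap k U X)) ∘ₗ
          sigmaMap k U P (X ⊗[k] U) ∘ₗ
            (TensorProduct.map (sigmaMap k U P X) LinearMap.id)) ∧
    (∀ (X : Type u) [AddCommGroup X] [Module k X],
      sigmaMap k U P X ∘ₗ etaMap k U (P ⊗[k] X) =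
        TensorProduct.map LinearMap.id (etaMap k U X)) ∧
    -- `γ` is a distributive law from `P ⊗ (−)` to the comonad `D = U ⊗ (−)`:
    (∀ (X : Type u) [AddCommGroup X] [Module k X],
      deltaMap k U (P ⊗[k] X) ∘ₗ gammaMap k U P X =
        (TensorProduct.map LinearMap.id (gammaMap k U P X)) ∘ₗ
          gammaMap k U P (U ⊗[k] X) ∘ₗ
            (TensorProduct.map LinearMap.id (deltaMap k U X))) ∧
    (∀ (X : Type u) [AddCommGroup X] [Module k X],
      epsMap k U (P ⊗[k] X) ∘ₗ gammaMap k U P X =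
        TensorProduct.map LinearMap.id (epsMap k U X)) ∧
    -- the Yang–Baxter hexagon with `θ`:
    (∀ (X : Type u) [AddCommGroup X] [Module k X],
      gammaMap k U P (X ⊗[k] U) ∘ₗ
          (TensorProduct.map LinearMap.id (thetaMap k U X)) ∘ₗ
            sigmaMap k U P (U ⊗[k] X) =
        (TensorProduct.map LinearMap.id (sigmaMap k U P X)) ∘ₗ
          thetaMap k U (P ⊗[k] X) ∘ₗ
            (TensorProduct.map (gammaMap k U P X) LinearMap.id)) :=
  ⟨fun X Y _ _ _ _ f => sigma_natural k U P X Y f,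
   fun X Y _ _ _ _ f => gamma_natural k U P X Y f,
   fun X _ _ => sigma_mu k U P X,
   fun X _ _ => sigma_eta k U P X,
   fun X _ _ => gamma_delta k U P X,
   fun X _ _ => gamma_eps k U P X,
   fun X _ _ => hexagon k U P X⟩

end BohmStefan
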